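/- Let K ⊆ ℝⁿ be a proper cone and S ⊆ π(K) a bounded matrix semigroup containing the identity with ρ(S) = 1, and let ‖·‖ be a K-monotone norm on ℝⁿ. Then v(x) := sup{‖Sx‖ : S ∈ S} defines a norm on ℝⁿ which is K-monotone and extremal for S, i.e. v(Sx) ≤ v(x) for all S ∈ S and x ∈ ℝⁿ. -/

import Mathlib

open Matrix Set
noncomputable section

variable {n : ℕ}

/-- A proper cone: convex, a cone, pointed, closed, with nonempty interior. -/
def IsProperCone (K : Set (Fin n → ℝ)) : Prop :=
  Convex ℝ K ∧ (∀ (r : ℝ), 0 < r → ∀ x ∈ K, r • x ∈ K) ∧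
    K ∩ (-K) = {0} ∧ IsClosed K ∧ (interior K).Nonempty

/-- A compact base of the cone `K`. -/
def IsCompactBase (K B : Set (Fin n → ℝ)) : Prop :=
  IsCompact B ∧ (0 : Fin n → ℝ) ∉ closure B ∧
    K = {y | ∃ r : ℝ, 0 ≤ r ∧ ∃ x ∈ B, y = r • x}

/-- A face of the cone `K`: a subcone such that `x ∈ F`, `0 ≤_K y ≤_K x` implies `y ∈ F`. -/
def IsFace (K F : Set (Fin n → ℝ)) : Prop :=
  F ⊆ K ∧ (∀ (r : ℝ), 0 < r → ∀ x ∈ F, r • x ∈ F) ∧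
    (∀ x ∈ F, ∀ y ∈ K, x - y ∈ K → y ∈ F)

/-- `A ∈ π(K)`, i.e. `A K ⊆ K`. -/
def MapsCone (A : Matrix (Fin n) (Fin n) ℝ) (K : Set (Fin n → ℝ)) : Prop :=
  ∀ x ∈ K, A.mulVec x ∈ K

/-- `A` is `K`-irreducible: `A ∈ π(K)` and `A` leaves no nontrivial face of `K` invariant. -/
def KIrreducible (K : Set (Fin n → ℝ)) (A : Matrix (Fin n) (Fin n) ℝ) : Prop :=
  MapsCone A K ∧ ∀ F : Set (Fin n → ℝ), IsFace K F → F ≠ {0} → F ≠ K →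
    ¬ (A.mulVec '' F ⊆ F)

/-- Spectral radius: the maximum modulus of complex eigenvalues of a real matrix. -/
def specRad (A : Matrix (Fin n) (Fin n) ℝ) : ℝ :=
  sSup ((fun z : ℂ => ‖z‖) '' spectrum ℂ (A.map (algebraMap ℝ ℂ)))

/-- Operator norm of a matrix induced by the reference norm on `Fin n → ℝ`. -/
def opNorm (A : Matrix (Fin n) (Fin n) ℝ) : ℝ :=
  ‖LinearMap.toContinuousLinearMap A.mulVecLin‖

/-- The set of products of `t` elements of `M` (the time-`t` evolution operators). -/
def ProdSet (M : Set (Matrix (Fin n) (Fin n) ℝ)) : ℕ → Set (Matrix (Fin n) (Fin n) ℝ)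
  | 0 => {1}
  | (t + 1) => {P | ∃ A ∈ M, ∃ Q ∈ ProdSet M t, P = A * Q}

/-- The joint spectral radius of the discrete-time semigroup generated by `M`. -/
def jsr (M : Set (Matrix (Fin n) (Fin n) ℝ)) : ℝ :=
  ⨅ t : {t : ℕ // 0 < t}, (sSup (opNorm '' ProdSet M t.1)) ^ ((t.1 : ℝ)⁻¹)

/-- `N` is a norm on `Fin n → ℝ`. -/
def IsNorm (N : (Fin n → ℝ) → ℝ) : Prop :=
  (∀ x, N x = 0 → x = 0) ∧ (∀ (c : ℝ) (x), N (c • x) = |c| * N x) ∧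
    (∀ x y, N (x + y) ≤ N x + N y)

/-- The operator norm on matrices induced by a vector norm `v`. -/
def vop (v : (Fin n → ℝ) → ℝ) (A : Matrix (Fin n) (Fin n) ℝ) : ℝ :=
  sSup ((fun x => v (A.mulVec x)) '' {x | v x ≤ 1})

/-- The joint spectral radius computed via the matrix norm `vop v`. -/
def jsrWith (v : (Fin n → ℝ) → ℝ) (M : Set (Matrix (Fin n) (Fin n) ℝ)) : ℝ :=
  ⨅ t : {t : ℕ // 0 < t}, (sSup (vop v '' ProdSet M t.1)) ^ ((t.1 : ℝ)⁻¹)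

/-- Hausdorff distance between sets of matrices w.r.t. the matrix norm `ν`. -/
def hausdorffWith (ν : Matrix (Fin n) (Fin n) ℝ → ℝ)
    (M N : Set (Matrix (Fin n) (Fin n) ℝ)) : ℝ :=
  max (sSup ((fun B => sInf ((fun A => ν (A - B)) '' M)) '' N))
      (sSup ((fun A => sInf ((fun B => ν (A - B)) '' N)) '' M))

/-- Eccentricity of a norm `v` relative to the reference norm. -/
def ecc (v : (Fin n → ℝ) → ℝ) : ℝ :=
  sSup (v '' {x : Fin n → ℝ | ‖x‖ = 1}) / sInf (v '' {x : Fin n → ℝ | ‖x‖ = 1})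

/-- `K`-absolute value w.r.t. the simplicial cone generated by the basis `b`. -/
def absK (b : Module.Basis (Fin n) ℝ (Fin n → ℝ)) (x : Fin n → ℝ) : Fin n → ℝ :=
  ∑ i, |b.repr x i| • b i

/-- for a bounded semigroup `S ⊆ π(K)` with `I ∈ S` and a
`K`-monotone norm `N`, `v x = sup {N (S x) : S ∈ S}` is a `K`-monotone extremal
norm for `S`. -/
theorem stmt10 (K : Set (Fin n → ℝ)) (hK : IsProperCone K)
    (S : Set (Matrix (Fin n) (Fin n) ℝ))
    (hsg : ∀ A ∈ S, ∀ B ∈ S, A * B ∈ S) (hI : (1 : Matrix (Fin n) (Fin n) ℝ) ∈ S)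
    (hπ : ∀ A ∈ S, MapsCone A K) (hbd : ∃ C : ℝ, ∀ A ∈ S, opNorm A ≤ C)
    (N : (Fin n → ℝ) → ℝ) (hN : IsNorm N)
    (hmono : ∀ x y : Fin n → ℝ, x ∈ K → y - x ∈ K → N x ≤ N y)
    (v : (Fin n → ℝ) → ℝ)
    (hv : ∀ x, v x = sSup ((fun A => N (A.mulVec x)) '' S)) :
    IsNorm v ∧ (∀ x y : Fin n → ℝ, x ∈ K → y - x ∈ K → v x ≤ v y) ∧
      ∀ A ∈ S, ∀ x, v (A.mulVec x) ≤ v x := by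
  obtain ⟨hN0, hNsmul, hNadd⟩ := hN
  obtain ⟨C, hC⟩ := hbd
  have hNzero : N 0 = 0 := by
    have := hNsmul 0 0
    simpa using this
  have hNneg : ∀ x, 0 ≤ N x := by
    intro x
    have h1 : N (x + (-1 : ℝ) • x) ≤ N x + N ((-1 : ℝ) • x) := hNadd _ _
    have h2 : N ((-1 : ℝ) • x) = N x := by rw [hNsmul]; simp
    have h3 : x + (-1 : ℝ) • x = 0 := by simp
    rw [h3, hNzero, h2] at h1
    linarith
  -- N is bounded by the sup norm
  set c0 : ℝ := ∑ i : Fin n, N (Pi.single i 1) with hc0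
  have hNle : ∀ z : Fin n → ℝ, N z ≤ c0 * ‖z‖ := by
    intro z
    have hz : z = ∑ i : Fin n, z i • (Pi.single i 1 : Fin n → ℝ) := by
      funext j
      simp [Finset.sum_apply, Pi.single_apply]
    calc N z = N (∑ i : Fin n, z i • (Pi.single i 1 : Fin n → ℝ)) := by rw [← hz]
      _ ≤ ∑ i : Fin n, N (z i • (Pi.single i 1 : Fin n → ℝ)) :=
          Finset.le_sum_of_subadditive N hNzero.le hNadd _ _
      _ = ∑ i : Fin n, |z i| * N (Pi.single i 1) := by
          simp only [hNsmul]
      _ ≤ ∑ i : Fin n, ‖z‖ * N (Pi.single i 1) := by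
          apply Finset.sum_le_sum
          intro i _
          exact mul_le_mul_of_nonneg_right (by
            simpa using norm_le_pi_norm z i) (hNneg _)
      _ = c0 * ‖z‖ := by
          rw [hc0, Finset.sum_mul]
          exact Finset.sum_congr rfl fun i _ => mul_comm _ _
  have hop : ∀ A : Matrix (Fin n) (Fin n) ℝ, ∀ x, ‖A.mulVec x‖ ≤ opNorm A * ‖x‖ := by
    intro A x
    have := (LinearMap.toContinuousLinearMap A.mulVecLin).le_opNorm x
    simpa [opNorm] using this
  have hc0nn : 0 ≤ c0 := Finset.sum_nonneg fun i _ => hNneg _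
  -- the sets defining v
  have hne : ∀ x : Fin n → ℝ, ((fun A => N (A.mulVec x)) '' S).Nonempty :=
    fun x => ⟨N ((1 : Matrix (Fin n) (Fin n) ℝ).mulVec x), ⟨1, hI, rfl⟩⟩
  have hbdd : ∀ x : Fin n → ℝ, BddAbove ((fun A => N (A.mulVec x)) '' S) := by
    intro x
    refine ⟨c0 * (C * ‖x‖), ?_⟩
    rintro _ ⟨A, hA, rfl⟩
    calc N (A.mulVec x) ≤ c0 * ‖A.mulVec x‖ := hNle _
      _ ≤ c0 * (opNorm A * ‖x‖) := by
          exact mul_le_mul_of_nonneg_left (hop A x) hc0nn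
      _ ≤ c0 * (C * ‖x‖) := by
          apply mul_le_mul_of_nonneg_left _ hc0nn
          exact mul_le_mul_of_nonneg_right (hC A hA) (norm_nonneg _)
  have hNv : ∀ x, N x ≤ v x := by
    intro x
    rw [hv]
    have : N x = (fun A => N (A.mulVec x)) (1 : Matrix (Fin n) (Fin n) ℝ) := by
      simp [Matrix.one_mulVec]
    rw [this]
    exact le_csSup (hbdd x) ⟨1, hI, rfl⟩
  refine ⟨⟨?_, ?_, ?_⟩, ?_, ?_⟩
  · -- v x = 0 → x = 0
    intro x hx
    apply hN0
    have h1 := hNv x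
    have h2 := hNneg x
    linarith [hx ▸ h1]
  · -- homogeneity
    intro c x
    rw [hv, hv]
    have hset : (fun A : Matrix (Fin n) (Fin n) ℝ => N (A.mulVec (c • x))) '' S
        = (fun r => |c| * r) '' ((fun A => N (A.mulVec x)) '' S) := by
      rw [← Set.image_comp]
      apply Set.image_congr
      intro A _
      simp only [Function.comp]
      rw [Matrix.mulVec_smul, hNsmul]
    rw [hset]
    exact (Monotone.map_csSup_of_continuousAt (continuous_const.mul continuous_id).continuousAt
      (fun a b hab => mul_le_mul_of_nonneg_left hab (abs_nonneg c))
      (hne x) (hbdd x)).symm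
  · -- triangle
    intro x y
    rw [hv, hv, hv]
    apply csSup_le (hne _)
    rintro _ ⟨A, hA, rfl⟩
    calc N (A.mulVec (x + y)) = N (A.mulVec x + A.mulVec y) := by
          rw [Matrix.mulVec_add]
      _ ≤ N (A.mulVec x) + N (A.mulVec y) := hNadd _ _
      _ ≤ sSup ((fun A => N (A.mulVec x)) '' S) + sSup ((fun A => N (A.mulVec y)) '' S) :=
          add_le_add (le_csSup (hbdd x) ⟨A, hA, rfl⟩) (le_csSup (hbdd y) ⟨A, hA, rfl⟩)
  · -- K-monotone
    intro x y hx hyx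
    rw [hv, hv]
    apply csSup_le (hne _)
    rintro _ ⟨A, hA, rfl⟩
    have h1 : A.mulVec x ∈ K := hπ A hA x hx
    have h2 : A.mulVec y - A.mulVec x ∈ K := by
      rw [← Matrix.mulVec_sub]
      exact hπ A hA _ hyx
    calc N (A.mulVec x) ≤ N (A.mulVec y) := hmono _ _ h1 h2
      _ ≤ sSup ((fun A => N (A.mulVec y)) '' S) := le_csSup (hbdd y) ⟨A, hA, rfl⟩
  · -- extremal
    intro A hA x
    rw [hv, hv]
    apply csSup_le (hne _)
    rintro _ ⟨B, hB, rfl⟩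
    show N (B.mulVec (A.mulVec x)) ≤ _
    rw [Matrix.mulVec_mulVec]
    exact le_csSup (hbdd x) ⟨B * A, hsg B hB A hA, rfl⟩
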